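/- For every Θ in the region |p| < π/2, the rotational stiffness map Θ ↦ Nᵀ(Θ) K_τ Θ is a local diffeomorphism at Θ (its derivative is a linear isomorphism), provided K_τ is positive definite diagonal. -/

import Mathlib

open Real Matrix

/-- The gimbal-to-spatial torque conversion matrix of the bushing model. -/
noncomputable def Nmat (p w : ℝ) : Matrix (Fin 3) (Fin 3) ℝ :=
  !![Real.cos w / Real.cos p, Real.sin w / Real.cos p, 0;
     -Real.sin w, Real.cos w, 0;
     Real.cos w * Real.tan p, Real.sin w * Real.tan p, 1]

/-- The rotational stiffness map `Θ ↦ N(Θ)ᵀ K_τ Θ` of the bushing model,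
with `Θ = (r, p, w)` encoded as a function `Fin 3 → ℝ`. -/
noncomputable def rotStiffness (Kτ : Matrix (Fin 3) (Fin 3) ℝ) (Θ : Fin 3 → ℝ) :
    Fin 3 → ℝ :=
  (Nmat (Θ 1) (Θ 2))ᵀ.mulVec (Kτ.mulVec Θ)

lemma rotStiffness_eq (kr kp ky : ℝ) :
    rotStiffness (Matrix.diagonal ![kr, kp, ky]) = fun Θ i =>
      ![(kr * Θ 0 * Real.cos (Θ 2) + ky * Θ 2 * (Real.cos (Θ 2) * Real.sin (Θ 1)))
          * (Real.cos (Θ 1))⁻¹ - kp * Θ 1 * Real.sin (Θ 2),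
        (kr * Θ 0 * Real.sin (Θ 2) + ky * Θ 2 * (Real.sin (Θ 2) * Real.sin (Θ 1)))
          * (Real.cos (Θ 1))⁻¹ + kp * Θ 1 * Real.cos (Θ 2),
        ky * Θ 2] i := by
  funext Θ i
  fin_cases i <;>
    simp [rotStiffness, Nmat, Matrix.mulVec, dotProduct, Fin.sum_univ_three,
      Matrix.diagonal, Real.tan_eq_sin_div_cos, div_eq_mul_inv] <;> ring

set_option maxHeartbeats 1000000 in
/-- At every `Θ` with `|p| < π/2`, the rotational stiffness map is a local
diffeomorphism: its derivative is a continuous linear isomorphism. -/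
theorem rotStiffness_local_diffeo (kr kp ky : ℝ)
    (hkr : 0 < kr) (hkp : 0 < kp) (hky : 0 < ky)
    (Θ : Fin 3 → ℝ) (hp : |Θ 1| < Real.pi / 2) :
    ∃ e : (Fin 3 → ℝ) ≃L[ℝ] (Fin 3 → ℝ),
      (e : (Fin 3 → ℝ) →L[ℝ] (Fin 3 → ℝ)) =
        fderiv ℝ (rotStiffness (Matrix.diagonal ![kr, kp, ky])) Θ := by
  have hcpos : 0 < Real.cos (Θ 1) :=
    Real.cos_pos_of_mem_Ioo ⟨(abs_lt.1 hp).1, (abs_lt.1 hp).2⟩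
  have hc : Real.cos (Θ 1) ≠ 0 := ne_of_gt hcpos
  set c := Real.cos (Θ 1) with hcdef
  set s := Real.sin (Θ 1) with hsdef
  set cw := Real.cos (Θ 2) with hcwdef
  set sw := Real.sin (Θ 2) with hswdef
  set r := Θ 0
  set p := Θ 1
  set w := Θ 2
  -- Jacobian matrix
  set J : Matrix (Fin 3) (Fin 3) ℝ :=
    !![kr*cw/c, (kr*r*cw*s + ky*w*cw)/c^2 - kp*sw, (-(kr*r*sw) + ky*(cw - w*sw)*s)/c - kp*p*cw;
       kr*sw/c, (kr*r*sw*s + ky*w*sw)/c^2 + kp*cw, (kr*r*cw + ky*(sw + w*cw)*s)/c - kp*p*sw;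
       0, 0, ky] with hJdef
  set L : (Fin 3 → ℝ) →L[ℝ] (Fin 3 → ℝ) :=
    LinearMap.toContinuousLinearMap (Matrix.toLin' J) with hLdef
  -- derivative building blocks
  have h0 : HasFDerivAt (𝕜 := ℝ) (fun Θ' : Fin 3 → ℝ => Θ' 0)
      (ContinuousLinearMap.proj 0) Θ := hasFDerivAt_apply 0 Θ
  have h1 : HasFDerivAt (𝕜 := ℝ) (fun Θ' : Fin 3 → ℝ => Θ' 1)
      (ContinuousLinearMap.proj 1) Θ := hasFDerivAt_apply 1 Θ
  have h2 : HasFDerivAt (𝕜 := ℝ) (fun Θ' : Fin 3 → ℝ => Θ' 2)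
      (ContinuousLinearMap.proj 2) Θ := hasFDerivAt_apply 2 Θ
  have hsin1 := h1.sin
  have hcos1 := h1.cos
  have hsin2 := h2.sin
  have hcos2 := h2.cos
  -- component 0
  have hinv1 : HasFDerivAt (fun Θ' : Fin 3 → ℝ => (Real.cos (Θ' 1))⁻¹)
      ((-ContinuousLinearMap.mulLeftRight ℝ ℝ (Real.cos (Θ 1))⁻¹ (Real.cos (Θ 1))⁻¹).comp
        ((-Real.sin (Θ 1)) • ContinuousLinearMap.proj 1)) Θ :=
    (hasFDerivAt_inv' (𝕜 := ℝ) hc).comp Θ hcos1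
  have hg0' := (((((h0.const_mul kr).mul hcos2).add
      ((h2.const_mul ky).mul (hcos2.mul hsin1))).mul hinv1).sub
      ((h1.const_mul kp).mul hsin2))
  have hg1' := (((((h0.const_mul kr).mul hsin2).add
      ((h2.const_mul ky).mul (hsin2.mul hsin1))).mul hinv1).add
      ((h1.const_mul kp).mul hcos2))
  have hg2' := h2.const_mul ky
  have hG : HasFDerivAt (fun Θ' : Fin 3 → ℝ => fun i : Fin 3 =>
      ![(kr * Θ' 0 * Real.cos (Θ' 2) + ky * Θ' 2 * (Real.cos (Θ' 2) * Real.sin (Θ' 1)))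
          * (Real.cos (Θ' 1))⁻¹ - kp * Θ' 1 * Real.sin (Θ' 2),
        (kr * Θ' 0 * Real.sin (Θ' 2) + ky * Θ' 2 * (Real.sin (Θ' 2) * Real.sin (Θ' 1)))
          * (Real.cos (Θ' 1))⁻¹ + kp * Θ' 1 * Real.cos (Θ' 2),
        ky * Θ' 2] i) L Θ := by
    rw [hasFDerivAt_pi']
    intro i
    fin_cases i
    · simp only [Matrix.cons_val_zero]
      convert hg0' using 1
      · rfl
      refine ContinuousLinearMap.ext fun v => ?_
      simp [hLdef, hJdef, Matrix.toLin'_apply, Matrix.mulVec, dotProduct,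
        Fin.sum_univ_three]
      have hc' : Real.cos (Θ 1) ≠ 0 := hc
      simp only [c, s, cw, sw, r, p, w]
      field_simp
      linear_combination (-(Real.cos (Θ 2)*ky*Θ 2*v 1)) * Real.sin_sq_add_cos_sq (Θ 1)
    · simp only [Matrix.cons_val_one, Matrix.head_cons]
      convert hg1' using 1
      · rfl
      refine ContinuousLinearMap.ext fun v => ?_
      simp [hLdef, hJdef, Matrix.toLin'_apply, Matrix.mulVec, dotProduct,
        Fin.sum_univ_three]
      have hc' : Real.cos (Θ 1) ≠ 0 := hc
      simp only [c, s, cw, sw, r, p, w]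
      field_simp
      linear_combination (-(Real.sin (Θ 2)*ky*Θ 2*v 1)) * Real.sin_sq_add_cos_sq (Θ 1)
    · simp only [Matrix.cons_val_two, Matrix.tail_cons, Matrix.head_cons]
      convert hg2' using 1
      · rfl
      · rfl
      refine ContinuousLinearMap.ext fun v => ?_
      simp [hLdef, hJdef, Matrix.toLin'_apply, Matrix.mulVec, dotProduct,
        Fin.sum_univ_three]
  have hF : HasFDerivAt (rotStiffness (Matrix.diagonal ![kr, kp, ky])) L Θ := by
    rw [rotStiffness_eq]
    exact hG
  have hdetJ : J.det = kr * kp * ky / c := by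
    simp [hJdef, Matrix.det_fin_three]
    field_simp
    linear_combination (c^2*kp) * Real.sin_sq_add_cos_sq (Θ 2)
  have hLdet : L.det ≠ 0 := by
    have : L.det = J.det := by
      simp [hLdef, ContinuousLinearMap.det]
    rw [this, hdetJ]
    positivity
  refine ⟨L.toContinuousLinearEquivOfDetNeZero hLdet, ?_⟩
  rw [ContinuousLinearMap.coe_toContinuousLinearEquivOfDetNeZero]
  exact hF.fderiv.symm
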